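/- Let k be a field. For each n ≥ 1 there is a representation M_n of the four-vertex square quiver (vertices a₊, a₋, b₊, b₋; arrows a₊→b₊, a₋→b₋, a₊→b₋, a₋→b₊) which is a brick, and M_n ≇ M_m for n ≠ m; hence the path algebra of this quiver admits infinitely many pairwise non-isomorphic bricks. -/

import Mathlib

/-- A representation of the four-vertex square quiver
(vertices a₊, a₋, b₊, b₋; arrows a₊→b₊, a₋→b₋, a₊→b₋, a₋→b₊),
given by dimension vectors and arrow matrices. -/
structure SquareQuiverRep (k : Type) [Field k] where
  dap : ℕ
  dam : ℕ
  dbp : ℕ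
  dbm : ℕ
  /-- arrow a₊ → b₊ -/
  fpp : Matrix (Fin dbp) (Fin dap) k
  /-- arrow a₋ → b₋ -/
  fmm : Matrix (Fin dbm) (Fin dam) k
  /-- arrow a₊ → b₋ -/
  fpm : Matrix (Fin dbm) (Fin dap) k
  /-- arrow a₋ → b₊ -/
  fmp : Matrix (Fin dbp) (Fin dam) k

variable {k : Type} [Field k]

/-- A morphism of representations of the square quiver: a family of linear maps
at the vertices commuting with all the arrow maps. -/
structure SquareQuiverRep.Hom (R S : SquareQuiverRep k) where
  gap : (Fin R.dap → k) →ₗ[k] (Fin S.dap → k)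
  gam : (Fin R.dam → k) →ₗ[k] (Fin S.dam → k)
  gbp : (Fin R.dbp → k) →ₗ[k] (Fin S.dbp → k)
  gbm : (Fin R.dbm → k) →ₗ[k] (Fin S.dbm → k)
  commpp : ∀ v, gbp (R.fpp.mulVec v) = S.fpp.mulVec (gap v)
  commmm : ∀ v, gbm (R.fmm.mulVec v) = S.fmm.mulVec (gam v)
  commpm : ∀ v, gbm (R.fpm.mulVec v) = S.fpm.mulVec (gap v)
  commmp : ∀ v, gbp (R.fmp.mulVec v) = S.fmp.mulVec (gam v)

/-- Two representations are isomorphic if there is a morphism between them all of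
whose vertex maps are bijective. -/
def SquareQuiverRep.Iso (R S : SquareQuiverRep k) : Prop :=
  ∃ g : R.Hom S, Function.Bijective g.gap ∧ Function.Bijective g.gam ∧
    Function.Bijective g.gbp ∧ Function.Bijective g.gbm

/-- A representation is a brick if it is nonzero and every endomorphism is a scalar
multiple of the identity (so its endomorphism ring is `k`, a division ring). -/
def SquareQuiverRep.IsBrick (R : SquareQuiverRep k) : Prop :=
  (R.dap + R.dam + R.dbp + R.dbm ≠ 0) ∧
    ∀ g : R.Hom R, ∃ c : k,
      g.gap = c • LinearMap.id ∧ g.gam = c • LinearMap.id ∧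
      g.gbp = c • LinearMap.id ∧ g.gbm = c • LinearMap.id

variable {k : Type} [Field k]

/-- inclusion matrix `[Id; 0]` -/
def upM (k : Type) [Field k] (n : ℕ) : Matrix (Fin (n+1)) (Fin n) k :=
  fun i j => if (i : ℕ) = (j : ℕ) then 1 else 0

/-- shifted inclusion matrix `[0; Id]` -/
def shiftM (k : Type) [Field k] (n : ℕ) : Matrix (Fin (n+1)) (Fin n) k :=
  fun i j => if (i : ℕ) = (j : ℕ) + 1 then 1 else 0

lemma upM_single (n : ℕ) (j : Fin n) :
    (upM k n).mulVec (Pi.single j (1:k)) = Pi.single (Fin.castSucc j) 1 := by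
  funext i
  simp only [upM, Matrix.mulVec, dotProduct]
  rw [Finset.sum_eq_single j]
  · by_cases h : (i:ℕ) = j
    · simp [h, Pi.single_apply, Fin.ext_iff, Fin.castSucc]
    · simp [h, Pi.single_apply, Fin.ext_iff, Fin.castSucc, h]
  · intro b _ hb
    simp [Pi.single_apply, hb]
  · simp

lemma shiftM_single (n : ℕ) (j : Fin n) :
    (shiftM k n).mulVec (Pi.single j (1:k)) = Pi.single (Fin.succ j) 1 := by
  funext i
  simp only [shiftM, Matrix.mulVec, dotProduct]
  rw [Finset.sum_eq_single j]
  · by_cases h : (i:ℕ) = (j:ℕ)+1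
    · simp [h, Pi.single_apply, Fin.ext_iff, Fin.succ]
    · simp [h, Pi.single_apply, Fin.ext_iff, Fin.succ]
  · intro b _ hb
    simp [Pi.single_apply, hb]
  · simp

lemma upM_mulVec (n : ℕ) (v : Fin n → k) (i : Fin (n+1)) :
    (upM k n).mulVec v i = if h : (i:ℕ) < n then v ⟨i, h⟩ else 0 := by
  simp only [upM, Matrix.mulVec, dotProduct]
  split
  · next h =>
    rw [Finset.sum_eq_single (⟨i, h⟩ : Fin n)]
    · simp
    · intro b _ hb
      have : (i:ℕ) ≠ (b:ℕ) := fun he => hb (by ext; simp [he.symm])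
      simp [this]
    · simp
  · next h =>
    apply Finset.sum_eq_zero
    intro j _
    have : (i:ℕ) ≠ (j:ℕ) := fun he => h (he ▸ j.isLt)
    simp [this]

lemma shiftM_mulVec (n : ℕ) (v : Fin n → k) (i : Fin (n+1)) :
    (shiftM k n).mulVec v i =
      if h : 0 < (i:ℕ) then v ⟨(i:ℕ)-1, by omega⟩ else 0 := by
  simp only [shiftM, Matrix.mulVec, dotProduct]
  split
  · next h =>
    rw [Finset.sum_eq_single (⟨(i:ℕ)-1, by omega⟩ : Fin n)]
    · simp; omega
    · intro b _ hb
      have : (i:ℕ) ≠ (b:ℕ)+1 := by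
        intro he; apply hb; ext; simp; omega
      simp [this]
    · simp
  · next h =>
    apply Finset.sum_eq_zero
    intro j _
    have : (i:ℕ) ≠ (j:ℕ)+1 := by omega
    simp [this]

/-- The representation `M_n`. -/
@[reducible] def Mrep (k : Type) [Field k] (n : ℕ) : SquareQuiverRep k :=
  ⟨n, n, n, n+1, 1, upM k n, shiftM k n, 1⟩
lemma Mrep_brick (N : ℕ) : (Mrep k (N+1)).IsBrick := by
  constructor
  · simp [Mrep]
  intro g
  have hbp_ap : ∀ v : Fin (N+1) → k, g.gbp v = g.gap v := by
    intro v; simpa [Mrep, Matrix.one_mulVec] using g.commpp v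
  have hbp_am : ∀ v : Fin (N+1) → k, g.gbp v = g.gam v := by
    intro v; simpa [Mrep, Matrix.one_mulVec] using g.commmp v
  have hgam : ∀ v : Fin (N+1) → k, g.gam v = g.gap v := fun v => (hbp_am v).symm.trans (hbp_ap v)
  set a : Fin (N+1) → Fin (N+1) → k := fun i j => g.gap (Pi.single j 1) i with ha
  have key : ∀ j : Fin (N+1), ∀ hj : (j:ℕ)+1 < N+1,
      (upM k (N+1)).mulVec (g.gap (Pi.single (⟨(j:ℕ)+1, by omega⟩ : Fin (N+1)) 1))
        = (shiftM k (N+1)).mulVec (g.gap (Pi.single j 1)) := by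
    intro j hj
    have h1 := g.commmm (Pi.single (⟨(j:ℕ)+1, by omega⟩ : Fin (N+1)) 1)
    have h2 := g.commpm (Pi.single j 1)
    simp only [Mrep] at h1 h2
    rw [upM_single] at h1
    rw [shiftM_single] at h2
    have hcast : Fin.castSucc (⟨(j:ℕ)+1, by omega⟩ : Fin (N+1)) = Fin.succ j := by
      ext; simp
    rw [hcast] at h1
    exact (congrArg (upM k (N+1)).mulVec (hgam _)).symm.trans (h1.symm.trans h2)
  have S1 : ∀ j : ℕ, (hj : j + 1 < N+1) → a ⟨0, by omega⟩ ⟨j+1, by omega⟩ = 0 := by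
    intro j hj
    have := congrFun (key ⟨j, by omega⟩ (by simpa using hj)) (⟨0, by omega⟩ : Fin (N+2))
    rw [upM_mulVec, shiftM_mulVec] at this
    simpa using this
  have S2 : ∀ i j : ℕ, (hi : i + 1 < N+1) → (hj : j + 1 < N+1) →
      a ⟨i+1, by omega⟩ ⟨j+1, by omega⟩ = a ⟨i, by omega⟩ ⟨j, by omega⟩ := by
    intro i j hi hj
    have := congrFun (key ⟨j, by omega⟩ (by simpa using hj)) (⟨i+1, by omega⟩ : Fin (N+2))
    rw [upM_mulVec, shiftM_mulVec] at this
    rw [dif_pos (show ((⟨i+1, by omega⟩ : Fin (N+2)) : ℕ) < N+1 from hi),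
        dif_pos (show 0 < ((⟨i+1, by omega⟩ : Fin (N+2)) : ℕ) from Nat.succ_pos i)] at this
    simpa using this
  have S3 : ∀ j : ℕ, (hj : j + 1 < N+1) → a ⟨N, by omega⟩ ⟨j, by omega⟩ = 0 := by
    intro j hj
    have := congrFun (key ⟨j, by omega⟩ (by simpa using hj)) (⟨N+1, by omega⟩ : Fin (N+2))
    rw [upM_mulVec, shiftM_mulVec] at this
    rw [dif_neg (by simp), dif_pos (by simp)] at this
    simpa using this.symm
  have ascend : ∀ s p q : ℕ, (hp : p + s ≤ N) → (hq : q + s ≤ N) →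
      a ⟨p+s, by omega⟩ ⟨q+s, by omega⟩ = a ⟨p, by omega⟩ ⟨q, by omega⟩ := by
    intro s
    induction s with
    | zero => intro p q _ _; rfl
    | succ s ih =>
      intro p q hp hq
      have h2 := S2 (p+s) (q+s) (by omega) (by omega)
      have h1 := ih p q (by omega) (by omega)
      calc a ⟨p+(s+1), by omega⟩ ⟨q+(s+1), by omega⟩
          = a ⟨(p+s)+1, by omega⟩ ⟨(q+s)+1, by omega⟩ := by
            congr 1
        _ = a ⟨p+s, by omega⟩ ⟨q+s, by omega⟩ := h2
        _ = _ := h1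
  set c : k := a ⟨0, by omega⟩ ⟨0, by omega⟩ with hc
  have adiag : ∀ i j : Fin (N+1), a i j = if (i:ℕ) = (j:ℕ) then c else 0 := by
    intro i j
    have hi := i.isLt
    have hjl := j.isLt
    rcases lt_trichotomy (i:ℕ) (j:ℕ) with h | h | h
    · rw [if_neg (by omega)]
      have h1 := ascend (i:ℕ) 0 ((j:ℕ)-(i:ℕ)) (by omega) (by omega)
      have h2 : a i j = a ⟨0+(i:ℕ), by omega⟩ ⟨((j:ℕ)-(i:ℕ))+(i:ℕ), by omega⟩ := by
        congr 1 <;> (ext; simp; try omega)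
      rw [h2, h1]
      have h3 : a ⟨0, by omega⟩ ⟨(j:ℕ)-(i:ℕ), by omega⟩
          = a ⟨0, by omega⟩ ⟨((j:ℕ)-(i:ℕ)-1)+1, by omega⟩ := by
        congr 1; ext; simp; omega
      rw [h3]
      exact S1 _ (by omega)
    · rw [if_pos h]
      have h1 := ascend (i:ℕ) 0 0 (by omega) (by omega)
      have h2 : a i j = a ⟨0+(i:ℕ), by omega⟩ ⟨0+(i:ℕ), by omega⟩ := by
        congr 1 <;> (ext; simp; try omega)
      rw [h2, h1]
    · rw [if_neg (by omega)]
      have h1 := ascend (N-(i:ℕ)) (i:ℕ) (j:ℕ) (by omega) (by omega)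
      have h2 : a ⟨(i:ℕ)+(N-(i:ℕ)), by omega⟩ ⟨(j:ℕ)+(N-(i:ℕ)), by omega⟩
          = a ⟨N, by omega⟩ ⟨(j:ℕ)+(N-(i:ℕ)), by omega⟩ := by
        congr 1; ext; simp; omega
      have h3 := S3 ((j:ℕ)+(N-(i:ℕ))) (by omega)
      have h4 : a i j = a ⟨(i:ℕ), by omega⟩ ⟨(j:ℕ), by omega⟩ := by congr 1
      rw [h4, ← h1, h2, h3]
  have hgapsingle : ∀ j : Fin (N+1),
      g.gap (Pi.single j 1) = c • (Pi.single j 1 : Fin (N+1) → k) := by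
    intro j
    funext i
    have := adiag i j
    simp only [ha] at this
    rw [this]
    simp only [Pi.smul_apply, Pi.single_apply, smul_eq_mul, Fin.ext_iff]
    split <;> simp
  have hgap : g.gap = c • LinearMap.id := by
    apply Module.Basis.ext (Pi.basisFun k (Fin (N+1)))
    intro j
    simpa [Pi.basisFun_apply] using hgapsingle j
  refine ⟨c, hgap, ?_, ?_, ?_⟩
  · apply Module.Basis.ext (Pi.basisFun k (Fin (N+1)))
    intro j
    simp only [Pi.basisFun_apply]
    exact (hgam _).trans ((hgapsingle j).trans (by rfl))
  · apply Module.Basis.ext (Pi.basisFun k (Fin (N+1)))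
    intro j
    simp only [Pi.basisFun_apply]
    exact (hbp_ap _).trans ((hgapsingle j).trans (by rfl))
  · apply Module.Basis.ext (Pi.basisFun k (Fin (N+2)))
    intro t
    simp only [Pi.basisFun_apply]
    by_cases ht : (t:ℕ) < N+1
    · have h1 := g.commmm (Pi.single (⟨(t:ℕ), ht⟩ : Fin (N+1)) 1)
      simp only [Mrep] at h1
      rw [upM_single] at h1
      have hcast : Fin.castSucc (⟨(t:ℕ), ht⟩ : Fin (N+1)) = t := by ext; simp
      rw [hcast] at h1
      refine h1.trans ?_
      calc (upM k (N+1)).mulVec (g.gam (Pi.single (⟨(t:ℕ), ht⟩ : Fin (N+1)) 1))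
          = (upM k (N+1)).mulVec (g.gap (Pi.single (⟨(t:ℕ), ht⟩ : Fin (N+1)) 1)) :=
            congrArg _ (hgam _)
        _ = (upM k (N+1)).mulVec (c • (Pi.single (⟨(t:ℕ), ht⟩ : Fin (N+1)) 1 : Fin (N+1) → k)) :=
            congrArg _ (hgapsingle _)
        _ = c • (upM k (N+1)).mulVec (Pi.single (⟨(t:ℕ), ht⟩ : Fin (N+1)) 1) :=
            Matrix.mulVec_smul _ _ _
        _ = _ := by rw [upM_single, hcast]; rfl
    · have ht' : t = Fin.succ (⟨N, by omega⟩ : Fin (N+1)) := by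
        ext; simp; omega
      have h2 := g.commpm (Pi.single (⟨N, by omega⟩ : Fin (N+1)) 1)
      simp only [Mrep] at h2
      rw [shiftM_single] at h2
      rw [ht']
      refine h2.trans ?_
      calc (shiftM k (N+1)).mulVec (g.gap (Pi.single (⟨N, by omega⟩ : Fin (N+1)) 1))
          = (shiftM k (N+1)).mulVec (c • (Pi.single (⟨N, by omega⟩ : Fin (N+1)) 1 : Fin (N+1) → k)) :=
            congrArg _ (hgapsingle _)
        _ = c • (shiftM k (N+1)).mulVec (Pi.single (⟨N, by omega⟩ : Fin (N+1)) 1) :=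
            Matrix.mulVec_smul _ _ _
        _ = _ := by rw [shiftM_single]; rfl
theorem stmt_7 (k : Type) [Field k] :
    -- for each n ≥ 1 there is a representation M_n of the square quiver which is
    -- a brick, and M_n ≇ M_m for n ≠ m: the path algebra of this quiver admits
    -- infinitely many pairwise non-isomorphic bricks
    ∃ M : ℕ → SquareQuiverRep k,
      (∀ n, 1 ≤ n → (M n).IsBrick) ∧
      (∀ n m, 1 ≤ n → 1 ≤ m → n ≠ m → ¬ (M n).Iso (M m)) := by
  refine ⟨fun n => Mrep k n, ?_, ?_⟩
  · intro n hn
    obtain ⟨N, rfl⟩ : ∃ N, n = N + 1 := ⟨n - 1, by omega⟩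
    exact Mrep_brick N
  · rintro n m _ _ hnm ⟨g, -, -, -, hbm⟩
    have e := LinearEquiv.ofBijective g.gbm hbm
    have h := e.finrank_eq
    simp only [Module.finrank_fin_fun] at h
    exact hnm (by simpa [Mrep] using h)
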